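/- Let G be a group acting by isometries on a lattice L of signature (1, r-1), and suppose G contains an element of infinite order. Then for any D ∈ L with q(D,D) > 0, the G-orbit of D is infinite. -/

import Mathlib

lemma aux_wcs {ι : Type*} (s : Finset ι) (a x y : ι → ℚ) (ha : ∀ i ∈ s, 0 ≤ a i) :
    (∑ i ∈ s, a i * (x i * y i)) ^ 2 ≤
      (∑ i ∈ s, a i * (x i * x i)) * (∑ i ∈ s, a i * (y i * y i)) := by
  have key : ∀ t : ℚ, 0 ≤ (∑ i ∈ s, a i * (y i * y i)) * (t * t)
      + (2 * ∑ i ∈ s, a i * (x i * y i)) * t + ∑ i ∈ s, a i * (x i * x i) := by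
    intro t
    have he : (∑ i ∈ s, a i * (y i * y i)) * (t * t)
        + (2 * ∑ i ∈ s, a i * (x i * y i)) * t + ∑ i ∈ s, a i * (x i * x i)
        = ∑ i ∈ s, a i * ((t * y i + x i) * (t * y i + x i)) := by
      rw [Finset.sum_mul, Finset.mul_sum, Finset.sum_mul, ← Finset.sum_add_distrib,
        ← Finset.sum_add_distrib]
      exact Finset.sum_congr rfl fun i _ => by ring
    rw [he]
    exact Finset.sum_nonneg fun i hi => mul_nonneg (ha i hi) (mul_self_nonneg _)
  have hd := discrim_le_zero key
  rw [discrim] at hd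
  nlinarith [hd]

lemma aux_diag {ι V : Type*} [Fintype ι] [DecidableEq ι] [AddCommGroup V] [Module ℚ V]
    (B : V →ₗ[ℚ] V →ₗ[ℚ] ℚ) (v : Module.Basis ι ℚ V)
    (hv : ∀ i j, i ≠ j → B (v i) (v j) = 0) (x y : V) :
    B x y = ∑ i, v.repr x i * (v.repr y i * B (v i) (v i)) := by
  have inner : ∀ i, B (v i) y = v.repr y i * B (v i) (v i) := by
    intro i
    conv_lhs => rw [← v.sum_repr y]
    rw [map_sum, Finset.sum_eq_single i]
    · rw [map_smul, smul_eq_mul]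
    · intro j _ hj
      rw [map_smul, hv i j (fun hh => hj hh.symm), smul_zero]
    · intro hi; exact absurd (Finset.mem_univ i) hi
  conv_lhs => rw [← v.sum_repr x]
  rw [map_sum, LinearMap.sum_apply]
  refine Finset.sum_congr rfl fun i _ => ?_
  rw [map_smul, LinearMap.smul_apply, smul_eq_mul, inner i]

lemma aux_neg (r : ℕ) [NeZero r]
    (q : (Fin r → ℚ) →ₗ[ℚ] (Fin r → ℚ) →ₗ[ℚ] ℚ)
    (b : Module.Basis (Fin r) ℚ (Fin r → ℚ))
    (hb : ∀ i j, i ≠ j → q (b i) (b j) = 0)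
    (hbneg : ∀ i : Fin r, i ≠ 0 → q (b i) (b i) < 0)
    (E : Fin r → ℚ) (hE : 0 < q E E)
    (w : Fin r → ℚ) (hw : q w E = 0) (hw0 : w ≠ 0) : q w w < 0 := by
  classical
  set c : Fin r → ℚ := fun i => q (b i) (b i) with hc
  set d : Fin r → ℚ := fun i => b.repr E i with hd
  set u : Fin r → ℚ := fun i => b.repr w i with hu
  set S : Finset (Fin r) := Finset.univ.erase 0 with hS
  have hsplit : ∀ f : Fin r → ℚ, ∑ i, f i = f 0 + ∑ i ∈ S, f i := by
    intro f
    rw [hS, Finset.add_sum_erase _ f (Finset.mem_univ 0)]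
  have hEE : q E E = d 0 * (d 0 * c 0) + ∑ i ∈ S, d i * (d i * c i) := by
    rw [aux_diag q b hb E E, hsplit]
  have hwE : u 0 * (d 0 * c 0) + ∑ i ∈ S, u i * (d i * c i) = 0 := by
    have h1 := aux_diag q b hb w E
    rw [hw, hsplit] at h1
    exact h1.symm
  have hww : q w w = u 0 * (u 0 * c 0) + ∑ i ∈ S, u i * (u i * c i) := by
    rw [aux_diag q b hb w w, hsplit]
  set A : ℚ := ∑ i ∈ S, (-c i) * (u i * u i) with hA
  set Bv : ℚ := ∑ i ∈ S, (-c i) * (u i * d i) with hB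
  set C : ℚ := ∑ i ∈ S, (-c i) * (d i * d i) with hC
  have hcneg : ∀ i ∈ S, 0 ≤ -c i := by
    intro i hi
    have := hbneg i (Finset.ne_of_mem_erase hi)
    simp only [hc]; linarith
  have hwcs : Bv ^ 2 ≤ A * C := aux_wcs S (fun i => -c i) u d hcneg
  have hAnn : 0 ≤ A :=
    Finset.sum_nonneg fun i hi => mul_nonneg (hcneg i hi) (mul_self_nonneg _)
  have hCnn : 0 ≤ C :=
    Finset.sum_nonneg fun i hi => mul_nonneg (hcneg i hi) (mul_self_nonneg _)
  have hCeq : C = d 0 * (d 0 * c 0) - q E E := by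
    have h1 : C = -∑ i ∈ S, d i * (d i * c i) := by
      rw [hC, ← Finset.sum_neg_distrib]
      exact Finset.sum_congr rfl fun i _ => by ring
    rw [h1, hEE]; ring
  have hBeq : Bv = u 0 * (d 0 * c 0) := by
    have : Bv = -∑ i ∈ S, u i * (d i * c i) := by
      rw [hB, ← Finset.sum_neg_distrib]
      exact Finset.sum_congr rfl fun i _ => by ring
    rw [this]; linarith [hwE]
  have hAeq : q w w = u 0 * (u 0 * c 0) - A := by
    have : A = -∑ i ∈ S, u i * (u i * c i) := by
      rw [hA, ← Finset.sum_neg_distrib]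
      exact Finset.sum_congr rfl fun i _ => by ring
    rw [hww, this]; ring
  have hd0 : 0 < d 0 * (d 0 * c 0) := by
    rw [hCeq] at hCnn; linarith
  rw [hAeq]
  by_cases hA0 : A = 0
  · -- then u i = 0 for i in S, and then u 0 = 0, contradiction with w ≠ 0
    have huS : ∀ i ∈ S, u i = 0 := by
      intro i hi
      have hterm := (Finset.sum_eq_zero_iff_of_nonneg
        (fun i hi => mul_nonneg (hcneg i hi) (mul_self_nonneg _))).1 hA0 i hi
      have hci : c i < 0 := hbneg i (Finset.ne_of_mem_erase hi)
      have : u i * u i = 0 := by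
        rcases mul_eq_zero.1 hterm with h | h
        · exfalso; linarith
        · exact h
      exact mul_self_eq_zero.1 this
    have hB0 : Bv = 0 := by
      rw [hB]
      exact Finset.sum_eq_zero fun i hi => by rw [huS i hi]; ring
    have hu0 : u 0 = 0 := by
      rw [hBeq] at hB0
      rcases mul_eq_zero.1 hB0 with h | h
      · exact h
      · exfalso; rw [h] at hd0; simp at hd0
    exfalso
    apply hw0
    have : b.repr w = 0 := by
      ext i
      by_cases hi : i = 0
      · rw [hi]; exact hu0
      · exact huS i (Finset.mem_erase.2 ⟨hi, Finset.mem_univ i⟩)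
    have := congrArg b.repr.symm this
    simpa using this
  · have hApos : 0 < A := lt_of_le_of_ne hAnn (Ne.symm hA0)
    have h1 : Bv ^ 2 = u 0 * (u 0 * c 0) * (d 0 * (d 0 * c 0)) := by
      rw [hBeq]; ring
    have h2 : A * C < A * (d 0 * (d 0 * c 0)) := by
      rw [hCeq]
      have : A * (d 0 * (d 0 * c 0) - q E E) = A * (d 0 * (d 0 * c 0)) - A * q E E := by ring
      rw [this]
      nlinarith [mul_pos hApos hE]
    have h3 : u 0 * (u 0 * c 0) * (d 0 * (d 0 * c 0)) < A * (d 0 * (d 0 * c 0)) := by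
      calc u 0 * (u 0 * c 0) * (d 0 * (d 0 * c 0)) = Bv ^ 2 := h1.symm
        _ ≤ A * C := hwcs
        _ < A * (d 0 * (d 0 * c 0)) := h2
    have := (mul_lt_mul_iff_left₀ hd0).1 h3
    linarith

lemma aux_posdef (r : ℕ) [NeZero r]
    (q : (Fin r → ℚ) →ₗ[ℚ] (Fin r → ℚ) →ₗ[ℚ] ℚ)
    (hsymm : ∀ x y, q x y = q y x)
    (b : Module.Basis (Fin r) ℚ (Fin r → ℚ))
    (hb : ∀ i j, i ≠ j → q (b i) (b j) = 0)
    (hbneg : ∀ i : Fin r, i ≠ 0 → q (b i) (b i) < 0)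
    (E : Fin r → ℚ) (hE : 0 < q E E)
    (x : Fin r → ℚ) (hx : x ≠ 0) :
    0 < 2 * (q x E * q x E) - q E E * q x x := by
  set α : ℚ := q x E / q E E with hα
  set w : Fin r → ℚ := x - α • E with hwdef
  have hEne : q E E ≠ 0 := ne_of_gt hE
  have hwE : q w E = 0 := by
    rw [hwdef, map_sub, LinearMap.sub_apply, map_smul, LinearMap.smul_apply, smul_eq_mul, hα]
    field_simp
    ring
  have hxw : x = w + α • E := by rw [hwdef]; abel
  have hqxE : q x E = α * q E E := by rw [hα]; field_simp
  have hqxx : q x x = q w w + α * α * q E E := by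
    conv_lhs => rw [hxw]
    simp only [map_add, map_smul, LinearMap.add_apply, LinearMap.smul_apply, smul_eq_mul]
    rw [hsymm E w, hwE]
    ring
  by_cases hw0 : w = 0
  · have hαne : α ≠ 0 := by
      intro h0
      apply hx
      rw [hxw, hw0, h0, zero_smul, add_zero]
    have hqww : q w w = 0 := by rw [hw0]; simp
    rw [hqxE, hqxx, hqww]
    have : 2 * (α * q E E * (α * q E E)) - q E E * (0 + α * α * q E E)
        = (α * α) * (q E E * q E E) := by ring
    rw [this]
    exact mul_pos (mul_self_pos.2 hαne) (mul_pos hE hE)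
  · have hqww : q w w < 0 := aux_neg r q b hb hbneg E hE w hwE hw0
    rw [hqxE, hqxx]
    nlinarith [mul_pos hE hE, mul_self_nonneg α]

def ctQ (r : ℕ) (x : Fin r → ℤ) : Fin r → ℚ := fun i => (x i : ℚ)

lemma aux_finorder (r : ℕ) [NeZero r]
    (q : (Fin r → ℚ) →ₗ[ℚ] (Fin r → ℚ) →ₗ[ℚ] ℚ)
    (hsymm : ∀ x y, q x y = q y x)
    (b : Module.Basis (Fin r) ℚ (Fin r → ℚ))
    (hb : ∀ i j, i ≠ j → q (b i) (b j) = 0)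
    (hbneg : ∀ i : Fin r, i ≠ 0 → q (b i) (b i) < 0)
    (G : Subgroup ((Fin r → ℤ) ≃ₗ[ℤ] (Fin r → ℤ)))
    (hG : ∀ g ∈ G, ∀ x y : Fin r → ℤ,
      q (fun i => ((g x) i : ℚ)) (fun i => ((g y) i : ℚ)) =
        q (fun i => (x i : ℚ)) (fun i => (y i : ℚ)))
    (h : (Fin r → ℤ) ≃ₗ[ℤ] (Fin r → ℤ)) (hhG : h ∈ G)
    (D₀ : Fin r → ℤ) (hfix : h D₀ = D₀)
    (hD₀ : 0 < q (fun i => (D₀ i : ℚ)) (fun i => (D₀ i : ℚ))) :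
    IsOfFinOrder h := by
  classical
  have hG' : ∀ g ∈ G, ∀ x y : Fin r → ℤ,
      q (ctQ r (g x)) (ctQ r (g y)) = q (ctQ r x) (ctQ r y) := hG
  have hE : 0 < q (ctQ r D₀) (ctQ r D₀) := hD₀
  -- the positive definite auxiliary form p
  have hpex : ∃ p : (Fin r → ℚ) →ₗ[ℚ] (Fin r → ℚ) →ₗ[ℚ] ℚ,
      ∀ x y, p x y = 2 * (q x (ctQ r D₀) * q y (ctQ r D₀))
        - q (ctQ r D₀) (ctQ r D₀) * q x y := by
    refine ⟨(2 : ℚ) • ((q.flip (ctQ r D₀)).smulRight (q.flip (ctQ r D₀)))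
      - (q (ctQ r D₀) (ctQ r D₀)) • q, fun x y => ?_⟩
    simp only [LinearMap.sub_apply, LinearMap.smul_apply, LinearMap.smulRight_apply,
      LinearMap.flip_apply, smul_eq_mul]
  obtain ⟨p, hp⟩ := hpex
  have hpsymm : p.IsSymm := by
    refine ⟨fun x y => ?_⟩
    simp only [RingHom.id_apply]
    rw [hp x y, hp y x, hsymm x y]
    ring
  have hpd : ∀ x : Fin r → ℚ, x ≠ 0 → 0 < p x x := by
    intro x hx
    rw [hp]
    exact aux_posdef r q hsymm b hb hbneg (ctQ r D₀) hE x hx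
  haveI : Invertible (2 : ℚ) := invertibleOfNonzero (by norm_num)
  obtain ⟨v, hv⟩ := LinearMap.BilinForm.exists_orthogonal_basis hpsymm
  have hvo : ∀ i j, i ≠ j → p (v i) (v j) = 0 := fun i j hij => hv hij
  have hμ : ∀ j, 0 < p (v j) (v j) := fun j => hpd (v j) (v.ne_zero j)
  set m : ℚ := ∑ i : Fin r, p (ctQ r (Pi.single i 1)) (ctQ r (Pi.single i 1)) with hm
  have hsingle_ne : ∀ i : Fin r, ctQ r (Pi.single i 1) ≠ 0 := by
    intro i hcontra
    have h1 := congrFun hcontra i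
    simp [ctQ, Pi.single_apply] at h1
  have hm_le : ∀ i : Fin r, p (ctQ r (Pi.single i 1)) (ctQ r (Pi.single i 1)) ≤ m :=
    fun i => Finset.single_le_sum
      (fun j _ => le_of_lt (hpd _ (hsingle_ne j))) (Finset.mem_univ i)
  set M : Fin (Module.finrank ℚ (Fin r → ℚ)) → ℚ :=
    fun j => max 1 (m / p (v j) (v j)) with hM
  set Cq : ℚ := ∑ i : Fin r, ∑ j, M j * |v j i| with hCq
  have hMnn : ∀ j, 0 ≤ M j := fun j => le_trans zero_le_one (le_max_left _ _)
  have hbound : ∀ X : Fin r → ℚ, p X X ≤ m → ∀ i, |X i| ≤ Cq := by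
    intro X hX i
    have hdiag : p X X = ∑ j, v.repr X j * (v.repr X j * p (v j) (v j)) :=
      aux_diag p v hvo X X
    have htj : ∀ j, |v.repr X j| ≤ M j := by
      intro j
      have hterm : v.repr X j * (v.repr X j * p (v j) (v j)) ≤ m := by
        refine le_trans ?_ hX
        rw [hdiag]
        exact Finset.single_le_sum
          (f := fun k => v.repr X k * (v.repr X k * p (v k) (v k)))
          (fun k _ => by
            show (0:ℚ) ≤ v.repr X k * (v.repr X k * p (v k) (v k))
            rw [← mul_assoc]
            exact mul_nonneg (mul_self_nonneg _) (hμ k).le)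
          (Finset.mem_univ j)
      have h2 : v.repr X j * v.repr X j ≤ m / p (v j) (v j) := by
        rw [le_div_iff₀ (hμ j)]
        nlinarith [hterm, hμ j]
      rcases le_or_gt |v.repr X j| 1 with hc | hc
      · exact le_trans hc (le_max_left _ _)
      · refine le_trans ?_ (le_max_right 1 (m / p (v j) (v j)))
        calc |v.repr X j| = |v.repr X j| * 1 := (mul_one _).symm
          _ ≤ |v.repr X j| * |v.repr X j| :=
              mul_le_mul_of_nonneg_left (le_of_lt hc) (abs_nonneg _)
          _ = v.repr X j * v.repr X j := abs_mul_abs_self _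
          _ ≤ m / p (v j) (v j) := h2
    have hXi : X i = ∑ j, v.repr X j * v j i := by
      conv_lhs => rw [← v.sum_repr X]
      rw [Finset.sum_apply]
      exact Finset.sum_congr rfl fun j _ => by simp
    calc |X i| = |∑ j, v.repr X j * v j i| := by rw [hXi]
      _ ≤ ∑ j, |v.repr X j * v j i| := Finset.abs_sum_le_sum_abs _ _
      _ ≤ ∑ j, M j * |v j i| := by
          refine Finset.sum_le_sum fun j _ => ?_
          rw [abs_mul]
          exact mul_le_mul_of_nonneg_right (htj j) (abs_nonneg _)
      _ ≤ Cq := by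
          rw [hCq]
          refine Finset.single_le_sum (f := fun i => ∑ j, M j * |v j i|) ?_ (Finset.mem_univ i)
          intro k _
          exact Finset.sum_nonneg fun j _ => mul_nonneg (hMnn j) (abs_nonneg _)
  set K : ℤ := ⌈Cq⌉ with hK
  set T : Set (Fin r → ℤ) := Set.pi Set.univ (fun _ => Set.Icc (-K) K) with hT
  have hTfin : T.Finite := Set.Finite.pi (fun _ => Set.finite_Icc _ _)
  haveI := hTfin.to_subtype
  have hmem : ∀ x : Fin r → ℤ, p (ctQ r x) (ctQ r x) ≤ m → x ∈ T := by
    intro x hx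
    rw [hT, Set.mem_univ_pi]
    intro i
    have h1 : |(x i : ℚ)| ≤ Cq := hbound (ctQ r x) hx i
    have h2 : |x i| ≤ K := by
      have h3 : ((|x i| : ℤ) : ℚ) ≤ (K : ℚ) := by
        rw [Int.cast_abs]
        exact le_trans h1 (Int.le_ceil Cq)
      exact_mod_cast h3
    exact Set.mem_Icc.2 (abs_le.1 h2)
  have hfixpow : ∀ k : ℕ, (h ^ k) D₀ = D₀ := by
    intro k
    induction k with
    | zero => rfl
    | succ n ih =>
        rw [pow_succ]
        show (h ^ n) (h D₀) = D₀
        rw [hfix, ih]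
  have hpinv : ∀ k : ℕ, ∀ x : Fin r → ℤ,
      p (ctQ r ((h ^ k) x)) (ctQ r ((h ^ k) x)) = p (ctQ r x) (ctQ r x) := by
    intro k x
    rw [hp, hp]
    have hq1 : q (ctQ r ((h ^ k) x)) (ctQ r ((h ^ k) x)) = q (ctQ r x) (ctQ r x) :=
      hG' (h ^ k) (pow_mem hhG k) x x
    have hq2 : q (ctQ r ((h ^ k) x)) (ctQ r D₀) = q (ctQ r x) (ctQ r D₀) := by
      have h3 := hG' (h ^ k) (pow_mem hhG k) x D₀
      rw [hfixpow k] at h3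
      exact h3
    rw [hq1, hq2]
  let F : ℕ → (Fin r → T) := fun k i => ⟨(h ^ k) (Pi.single i 1),
    hmem _ (by rw [hpinv k (Pi.single i 1)]; exact hm_le i)⟩
  obtain ⟨k, l, hkl, hF⟩ := Finite.exists_ne_map_eq_of_infinite F
  have main : ∀ k l : ℕ, k < l → F k = F l → IsOfFinOrder h := by
    intro k l hlt hFe
    have hbasis : ∀ i, (h ^ k) (Pi.single i 1) = (h ^ l) (Pi.single i 1) :=
      fun i => Subtype.ext_iff.1 (congrFun hFe i)
    obtain ⟨n, hln, hnpos⟩ : ∃ n, l = k + n ∧ 0 < n := ⟨l - k, by omega, by omega⟩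
    have hgrp : (h ^ k)⁻¹ * h ^ l = h ^ n := by
      rw [hln, pow_add, inv_mul_cancel_left]
    have hfixbasis : ∀ i, (h ^ n) (Pi.single i 1) = Pi.single i 1 := by
      intro i
      calc (h ^ n) (Pi.single i 1) = ((h ^ k)⁻¹ * h ^ l) (Pi.single i 1) := by rw [hgrp]
        _ = (h ^ k)⁻¹ ((h ^ l) (Pi.single i 1)) := rfl
        _ = (h ^ k)⁻¹ ((h ^ k) (Pi.single i 1)) := by rw [hbasis i]
        _ = ((h ^ k)⁻¹ * h ^ k) (Pi.single i 1) := rfl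
        _ = Pi.single i 1 := by rw [inv_mul_cancel]; rfl
    have hsm : ∀ (i : Fin r) (c : ℤ), Pi.single i c = c • (Pi.single i 1 : Fin r → ℤ) := by
      intro i c
      funext j
      by_cases hj : j = i <;> simp [Pi.single_apply, hj]
    have hone : h ^ n = 1 := by
      apply LinearEquiv.ext
      intro x
      show (h ^ n) x = x
      have hx : x = ∑ i, Pi.single i (x i) := (Finset.univ_sum_single x).symm
      conv_lhs => rw [hx]
      conv_rhs => rw [hx]
      rw [map_sum]
      refine Finset.sum_congr rfl fun i _ => ?_
      rw [hsm i (x i)]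
      rw [map_smul]
      rw [hfixbasis i]
    exact isOfFinOrder_iff_pow_eq_one.2 ⟨n, hnpos, hone⟩
  rcases hkl.lt_or_gt with hlt | hlt
  · exact main k l hlt hF
  · exact main l k hlt hF.symm

/-- A group of isometries of a lattice of signature (1, r-1)
containing an element of infinite order has infinite orbit on any class `D`
with `q D D > 0`. -/
theorem infinite_orbit_of_group_with_infinite_order_element
    (r : ℕ) [NeZero r]
    (q : (Fin r → ℚ) →ₗ[ℚ] (Fin r → ℚ) →ₗ[ℚ] ℚ)
    (hsymm : ∀ x y, q x y = q y x)
    (hint : ∀ x y : Fin r → ℤ,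
      ∃ k : ℤ, q (fun i => (x i : ℚ)) (fun i => (y i : ℚ)) = (k : ℚ))
    (hsig : ∃ b : Module.Basis (Fin r) ℚ (Fin r → ℚ),
      (∀ i j, i ≠ j → q (b i) (b j) = 0) ∧
      0 < q (b 0) (b 0) ∧ (∀ i : Fin r, i ≠ 0 → q (b i) (b i) < 0))
    (G : Subgroup ((Fin r → ℤ) ≃ₗ[ℤ] (Fin r → ℤ)))
    (hG : ∀ g ∈ G, ∀ x y : Fin r → ℤ,
      q (fun i => ((g x) i : ℚ)) (fun i => ((g y) i : ℚ)) =
        q (fun i => (x i : ℚ)) (fun i => (y i : ℚ)))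
    (hinf : ∃ g ∈ G, ¬ IsOfFinOrder g)
    (D : Fin r → ℤ)
    (hD : 0 < q (fun i => (D i : ℚ)) (fun i => (D i : ℚ))) :
    {x : Fin r → ℤ | ∃ g ∈ G, g D = x}.Infinite := by
  classical
  obtain ⟨b, hb, hb0, hbneg⟩ := hsig
  by_contra hfin
  rw [Set.not_infinite] at hfin
  haveI := hfin.to_subtype
  obtain ⟨g, hgG, hgord⟩ := hinf
  let f : ℕ → {x : Fin r → ℤ | ∃ g ∈ G, g D = x} := fun k =>
    ⟨(g ^ k) D, ⟨g ^ k, pow_mem hgG k, rfl⟩⟩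
  obtain ⟨k, l, hkl, hf⟩ := Finite.exists_ne_map_eq_of_infinite f
  have main : ∀ k l : ℕ, k < l → (g ^ k) D = (g ^ l) D → False := by
    intro k l hlt he
    obtain ⟨n, hln, hnpos⟩ : ∃ n, l = k + n ∧ 0 < n := ⟨l - k, by omega, by omega⟩
    have hgrp : (g ^ n) * (g ^ k) = g ^ l := by
      rw [← pow_add, show n + k = l from by omega]
    have hfix : (g ^ n) ((g ^ k) D) = (g ^ k) D := by
      calc (g ^ n) ((g ^ k) D) = ((g ^ n) * (g ^ k)) D := rfl
        _ = (g ^ l) D := by rw [hgrp]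
        _ = (g ^ k) D := he.symm
    have hDq : 0 < q (fun i => (((g ^ k) D) i : ℚ)) (fun i => (((g ^ k) D) i : ℚ)) := by
      rw [hG (g ^ k) (pow_mem hgG k) D D]
      exact hD
    have hford : IsOfFinOrder (g ^ n) :=
      aux_finorder r q hsymm b hb hbneg G hG (g ^ n) (pow_mem hgG n) ((g ^ k) D) hfix hDq
    obtain ⟨mm, hmpos, hmone⟩ := isOfFinOrder_iff_pow_eq_one.1 hford
    apply hgord
    refine isOfFinOrder_iff_pow_eq_one.2 ⟨n * mm, by positivity, ?_⟩
    rw [pow_mul]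
    exact hmone
  rcases hkl.lt_or_gt with hlt | hlt
  · exact main k l hlt (congrArg Subtype.val hf)
  · exact main l k hlt (congrArg Subtype.val hf).symm
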